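/- Conjugation of the charge matrix by the Weyl group element W := exp(−(π/2)·h₅) · exp((π/2)·(e₄₅ + f₄₅)) reverses the gravitational charges while fixing the electromagnetic ones: for all m,n,q,h ∈ ℝ, W · Q(m,n,q,h) · W⁻¹ = Q(−m,−n,q,h). -/

import Mathlib

open Matrix Complex

noncomputable section

/-- The signature-(2,1) metric `η`. -/
def η : Matrix (Fin 3) (Fin 3) ℂ := !![0,0,-1; 0,1,0; -1,0,0]

/-- The real Lie algebra `su(2,1) = {X : tr X = 0 and ηX + X†η = 0}` (as a set of matrices,
with the matrix commutator as bracket). -/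
def su21 : Set (Matrix (Fin 3) (Fin 3) ℂ) := {X | X.trace = 0 ∧ η * X + Xᴴ * η = 0}

def h4 : Matrix (Fin 3) (Fin 3) ℂ := !![1,0,0; 0,0,0; 0,0,-1]
def h5 : Matrix (Fin 3) (Fin 3) ℂ := !![I,0,0; 0,-2*I,0; 0,0,I]
def e4 : Matrix (Fin 3) (Fin 3) ℂ := !![0,1,0; 0,0,1; 0,0,0]
def e5 : Matrix (Fin 3) (Fin 3) ℂ := !![0,I,0; 0,0,-I; 0,0,0]
def e45 : Matrix (Fin 3) (Fin 3) ℂ := !![0,0,I; 0,0,0; 0,0,0]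
def f4 : Matrix (Fin 3) (Fin 3) ℂ := !![0,0,0; 1,0,0; 0,1,0]
def f5 : Matrix (Fin 3) (Fin 3) ℂ := !![0,0,0; I,0,0; 0,-I,0]
def f45 : Matrix (Fin 3) (Fin 3) ℂ := !![0,0,0; 0,0,0; I,0,0]
/-- The charge matrix `Q(m,n,q,h)`. -/
def Qc (m n q h : ℝ) : Matrix (Fin 3) (Fin 3) ℂ :=
  (-m : ℝ) • h4 + n • (e45 - f45) - (q / Real.sqrt 2) • (e4 - f4) + (h / Real.sqrt 2) • (e5 + f5)

/-- The Weyl group element `W = exp(−(π/2) h₅) · exp((π/2)(e₄₅ + f₄₅))`. -/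
def W : Matrix (Fin 3) (Fin 3) ℂ :=
  NormedSpace.exp ((-(Real.pi/2) : ℝ) • h5) *
    NormedSpace.exp ((Real.pi/2 : ℝ) • (e45 + f45))

/- ### Auxiliary lemmas -/

lemma cexp_I' : Complex.exp ((Real.pi : ℂ)/2 * I) = I := by
  have : (Real.pi : ℂ)/2 * I = ((Real.pi/2 : ℝ) : ℂ) * I := by push_cast; ring
  rw [this, Complex.exp_mul_I, ← Complex.ofReal_cos, ← Complex.ofReal_sin]
  norm_num [Real.cos_pi_div_two, Real.sin_pi_div_two]

lemma cexp_negI' : Complex.exp (-((Real.pi : ℂ)/2 * I)) = -I := by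
  rw [Complex.exp_neg, cexp_I', Complex.inv_I]

lemma expA : NormedSpace.exp ((-(Real.pi/2) : ℝ) • h5) = !![-I,0,0; 0,-1,0; 0,0,-I] := by
  have hd : ((-(Real.pi/2) : ℝ) • h5)
      = Matrix.diagonal ![((-(Real.pi/2) : ℝ) : ℂ) * I, (Real.pi : ℝ) * I,
          ((-(Real.pi/2) : ℝ) : ℂ) * I] := by
    ext i j
    fin_cases i <;> fin_cases j <;>
      simp [h5, Matrix.diagonal_apply, Matrix.diagonal, Matrix.vecHead, Matrix.vecTail] <;>
        push_cast <;> ring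
  rw [hd, Matrix.exp_diagonal]
  ext i j
  fin_cases i <;> fin_cases j <;>
    simp [Matrix.diagonal, Pi.exp_def, ← Complex.exp_eq_exp_ℂ, cexp_negI', Complex.exp_pi_mul_I,
      Matrix.vecHead, Matrix.vecTail]

def Umat : Matrix (Fin 3) (Fin 3) ℂ := !![1,0,1; 0,1,0; 1,0,-1]
def Umatinv : Matrix (Fin 3) (Fin 3) ℂ := !![1/2,0,1/2; 0,1,0; 1/2,0,-1/2]

lemma Umat_mul_inv : Umat * Umatinv = 1 := by
  ext i j
  fin_cases i <;> fin_cases j <;>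
    simp [Umat, Umatinv, Matrix.mul_apply, Fin.sum_univ_three, Matrix.one_apply] <;> norm_num

lemma Umat_inv : Umat⁻¹ = Umatinv := Matrix.inv_eq_right_inv Umat_mul_inv

lemma Umat_unit : IsUnit Umat := by
  rw [Matrix.isUnit_iff_isUnit_det]
  have : Umat.det = -2 := by simp [Umat, Matrix.det_fin_three]; norm_num
  rw [this]; norm_num

def dvec : Fin 3 → ℂ := ![(Real.pi : ℂ)/2 * I, 0, -((Real.pi : ℂ)/2 * I)]

lemma conj_eq : ((Real.pi/2 : ℝ) • (e45 + f45)) = Umat * Matrix.diagonal dvec * Umat⁻¹ := by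
  have h1 : ((Real.pi/2 : ℝ) • (e45 + f45)) * Umat = Umat * Matrix.diagonal dvec := by
    ext i j
    fin_cases i <;> fin_cases j <;>
      simp [e45, f45, Umat, dvec, Matrix.mul_apply, Fin.sum_univ_three, Matrix.diagonal,
        Matrix.vecHead, Matrix.vecTail] <;> push_cast <;> ring
  have h2 : IsUnit Umat.det := (Matrix.isUnit_iff_isUnit_det Umat).mp Umat_unit
  calc ((Real.pi/2 : ℝ) • (e45 + f45))
      = ((Real.pi/2 : ℝ) • (e45 + f45)) * Umat * Umat⁻¹ := by
        rw [Matrix.mul_nonsing_inv_cancel_right _ _ h2]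
    _ = Umat * Matrix.diagonal dvec * Umat⁻¹ := by rw [h1]

lemma expB : NormedSpace.exp ((Real.pi/2 : ℝ) • (e45 + f45)) = !![0,0,I; 0,1,0; I,0,0] := by
  rw [conj_eq, Matrix.exp_conj Umat (Matrix.diagonal dvec) Umat_unit,
    Matrix.exp_diagonal, Umat_inv]
  ext i j
  fin_cases i <;> fin_cases j <;>
    simp [Umat, Umatinv, dvec, Matrix.mul_apply, Fin.sum_univ_three, Matrix.diagonal,
      Pi.exp_def, ← Complex.exp_eq_exp_ℂ, cexp_I', cexp_negI', NormedSpace.exp_zero,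
      Matrix.vecHead, Matrix.vecTail, Function.comp] <;> ring

lemma W_eq : W = !![0,0,1; 0,-1,0; 1,0,0] := by
  rw [W, expA, expB]
  ext i j
  fin_cases i <;> fin_cases j <;>
    simp [Matrix.mul_apply, Fin.sum_univ_three, Complex.I_mul_I,
      Matrix.vecHead, Matrix.vecTail, Function.comp] <;> rfl

lemma W_inv : W⁻¹ = W := by
  refine Matrix.inv_eq_right_inv ?_
  rw [W_eq]
  ext i j
  fin_cases i <;> fin_cases j <;>
    simp [Matrix.mul_apply, Fin.sum_univ_three, Matrix.one_apply,
      Matrix.vecHead, Matrix.vecTail, Function.comp]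

lemma Qc_eq (m n q h : ℝ) : Qc m n q h =
    !![(-m : ℂ), -((q:ℂ)/Real.sqrt 2) + ((h:ℂ)/Real.sqrt 2)*I, (n:ℂ)*I;
       ((q:ℂ)/Real.sqrt 2) + ((h:ℂ)/Real.sqrt 2)*I, 0, -((q:ℂ)/Real.sqrt 2) - ((h:ℂ)/Real.sqrt 2)*I;
       -(n:ℂ)*I, ((q:ℂ)/Real.sqrt 2) - ((h:ℂ)/Real.sqrt 2)*I, (m : ℂ)] := by
  ext i j
  fin_cases i <;> fin_cases j <;>
    simp [Qc, h4, e45, f45, e4, f4, e5, f5, Matrix.vecHead, Matrix.vecTail] <;>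
      push_cast <;> ring

set_option maxHeartbeats 1000000 in
/-- Conjugation of the charge matrix by `W` reverses the gravitational charges `(m,n)` and
fixes the electromagnetic charges `(q,h)`. -/
theorem weyl_action_on_charges :
    ∀ m n q h : ℝ, W * Qc m n q h * W⁻¹ = Qc (-m) (-n) q h := by
  intro m n q h
  rw [W_inv, W_eq, Qc_eq, Qc_eq]
  ext i j
  fin_cases i <;> fin_cases j <;>
    simp [Matrix.mul_apply, Fin.sum_univ_three, Matrix.vecHead, Matrix.vecTail,
      Function.comp] <;> push_cast <;> ring
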